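/- For λ > −1, t ∈ ℝ and m = 2, the recurrence coefficients β_n(t;λ) of the monic polynomials orthogonal with respect to the generalised quartic Freud weight |x|^{2λ+1} exp(t x² − x⁴) satisfy the discrete Painlevé I equation 4 β_n (β_{n−1} + β_n + β_{n+1}) − 2 t β_n = n + (λ + 1/2)(1 − (−1)ⁿ) for all n ≥ 1. -/

import Mathlib

open MeasureTheory Real Polynomial

namespace DPain

open Filter Set Topology

noncomputable def W (lam t : ℝ) (x : ℝ) : ℝ :=
  |x| ^ (2 * lam + 1) * Real.exp (t * x ^ 2 - x ^ 4)

variable {lam t : ℝ}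

lemma W_nonneg (x : ℝ) : 0 ≤ W lam t x :=
  mul_nonneg (Real.rpow_nonneg (abs_nonneg x) _) (Real.exp_pos _).le

lemma W_pos {x : ℝ} (hx : x ≠ 0) : 0 < W lam t x :=
  mul_pos (Real.rpow_pos_of_pos (abs_pos.mpr hx) _) (Real.exp_pos _)

lemma W_even (x : ℝ) : W lam t (-x) = W lam t x := by
  unfold W; rw [abs_neg]; ring_nf

lemma meas_W : Measurable (W lam t) := by
  apply (measurable_abs.pow measurable_const).mul
  exact (((measurable_id.pow_const 2).const_mul t).sub (measurable_id.pow_const 4)).exp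

lemma exp_bound (x : ℝ) :
    Real.exp (t * x ^ 2 - x ^ 4) ≤ Real.exp ((t + 1) ^ 2 / 4) * Real.exp (-x ^ 2) := by
  rw [← Real.exp_add]
  apply Real.exp_le_exp.mpr
  nlinarith [sq_nonneg ((t + 1) / 2 - x ^ 2), sq_nonneg x]

lemma integrable_rpow_W {s : ℝ} (hs : -1 < s) :
    Integrable (fun x : ℝ => |x| ^ s * Real.exp (t * x ^ 2 - x ^ 4)) := by
  have hbase : Integrable (fun x : ℝ => |x| ^ s * Real.exp (-1 * x ^ 2)) := by
    have h1 : IntegrableOn (fun x : ℝ => x ^ s * Real.exp (-1 * x ^ 2)) (Ioi 0) :=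
      integrableOn_rpow_mul_exp_neg_mul_sq one_pos hs
    have h1' : IntegrableOn (fun x : ℝ => |x| ^ s * Real.exp (-1 * x ^ 2)) (Ioi 0) := by
      refine h1.congr_fun (fun x hx => ?_) measurableSet_Ioi
      rw [abs_of_pos hx]
    rw [← integrableOn_univ, ← Iio_union_Ici (a := (0 : ℝ)), integrableOn_union,
      integrableOn_Ici_iff_integrableOn_Ioi]
    refine ⟨?_, h1'⟩
    rw [← (Measure.measurePreserving_neg (volume : Measure ℝ)).integrableOn_comp_preimage
        (Homeomorph.neg ℝ).measurableEmbedding]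
    simp only [Function.comp_def, neg_preimage, neg_Iio, neg_neg, neg_zero]
    refine h1'.congr_fun (fun x _ => ?_) measurableSet_Ioi
    simp [abs_neg]
  refine (hbase.const_mul (Real.exp ((t + 1) ^ 2 / 4))).mono'
    ((measurable_abs.pow measurable_const).mul
      ((((measurable_id.pow_const 2).const_mul t).sub (measurable_id.pow_const 4)).exp)).aestronglyMeasurable
    (Eventually.of_forall fun x => ?_)
  rw [Real.norm_eq_abs, abs_mul, abs_of_nonneg (Real.rpow_nonneg (abs_nonneg x) _),
    abs_of_nonneg (Real.exp_pos _).le]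
  calc |x| ^ s * Real.exp (t * x ^ 2 - x ^ 4)
      ≤ |x| ^ s * (Real.exp ((t + 1) ^ 2 / 4) * Real.exp (-x ^ 2)) :=
        mul_le_mul_of_nonneg_left (exp_bound x) (Real.rpow_nonneg (abs_nonneg x) _)
    _ = Real.exp ((t + 1) ^ 2 / 4) * (|x| ^ s * Real.exp (-1 * x ^ 2)) := by ring_nf

lemma integrable_monomial_W (hlam : -1 < lam) (n : ℕ) :
    Integrable (fun x : ℝ => x ^ n * W lam t x) := by
  have hs : (-1 : ℝ) < 2 * lam + 1 + n := by
    have : (0:ℝ) ≤ (n:ℝ) := Nat.cast_nonneg n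
    linarith
  refine (integrable_rpow_W (t := t) hs).mono'
    ((measurable_id.pow_const n).mul meas_W).aestronglyMeasurable ?_
  have h0 : ∀ᵐ x : ℝ, x ≠ 0 := by
    rw [ae_iff]
    convert Real.volume_singleton (a := (0:ℝ)) using 2
    ext x; simp
  filter_upwards [h0] with x hx
  rw [Real.norm_eq_abs, abs_mul, W, abs_mul,
    abs_of_nonneg (Real.rpow_nonneg (abs_nonneg x) _),
    abs_of_nonneg (Real.exp_pos _).le, abs_pow]
  have hax : (0:ℝ) < |x| := abs_pos.mpr hx
  rw [← mul_assoc, ← Real.rpow_natCast |x| n, ← Real.rpow_add hax,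
    show (n:ℝ) + (2*lam+1) = 2*lam+1+n by ring]

lemma integrable_poly_W (hlam : -1 < lam) (p : ℝ[X]) :
    Integrable (fun x : ℝ => p.eval x * W lam t x) := by
  induction p using Polynomial.induction_on' with
  | add p q hp hq =>
      exact (hp.add hq).congr (Eventually.of_forall fun x => by
        simp [Polynomial.eval_add, add_mul])
  | monomial n a =>
      refine ((integrable_monomial_W (t := t) hlam n).const_mul a).congr
        (Eventually.of_forall fun x => ?_)
      simp [Polynomial.eval_monomial]; ring


lemma poly_W_tendsto_atTop (p : ℝ[X]) :
    Tendsto (fun x => p.eval x * W lam t x) atTop (𝓝 0) := by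
  set N := p.natDegree with hN
  set M := ⌈2 * lam + 1⌉₊ with hM
  set c := ∑ k ∈ Finset.range (N + 1), |p.coeff k| with hc
  have hcn : 0 ≤ c := Finset.sum_nonneg fun k _ => abs_nonneg _
  have hg : Tendsto (fun x : ℝ => (c * Real.exp ((t+1)^2/4)) * (x ^ (N + M) * Real.exp (-x)))
      atTop (𝓝 0) := by
    simpa using (tendsto_pow_mul_exp_neg_atTop_nhds_zero (N + M)).const_mul
      (c * Real.exp ((t+1)^2/4))
  refine squeeze_zero_norm' ?_ hg
  · filter_upwards [eventually_ge_atTop (1 : ℝ)] with x hx1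
    have hx0 : (0:ℝ) < x := lt_of_lt_of_le one_pos hx1
    have bound1 : |p.eval x| ≤ c * x ^ N := by
      rw [Polynomial.eval_eq_sum_range]
      refine le_trans (Finset.abs_sum_le_sum_abs _ _) ?_
      rw [hc, Finset.sum_mul]
      refine Finset.sum_le_sum fun i hi => ?_
      rw [abs_mul, abs_pow, abs_of_pos hx0]
      exact mul_le_mul_of_nonneg_left
        (pow_le_pow_right₀ hx1 (Nat.lt_succ_iff.mp (Finset.mem_range.mp hi))) (abs_nonneg _)
    have bound2 : W lam t x ≤ x ^ M * (Real.exp ((t+1)^2/4) * Real.exp (-x)) := by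
      have h1 : |x| ^ (2*lam+1) ≤ x ^ M := by
        rw [abs_of_pos hx0, ← Real.rpow_natCast x M]
        exact Real.rpow_le_rpow_of_exponent_le hx1 (Nat.le_ceil _)
      have h2 : Real.exp (t * x^2 - x^4) ≤ Real.exp ((t+1)^2/4) * Real.exp (-x) := by
        refine le_trans (exp_bound x) (mul_le_mul_of_nonneg_left ?_ (Real.exp_pos _).le)
        apply Real.exp_le_exp.mpr
        nlinarith
      exact mul_le_mul h1 h2 (Real.exp_pos _).le (by positivity)
    rw [Real.norm_eq_abs, abs_mul, abs_of_nonneg (W_nonneg x)]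
    calc |p.eval x| * W lam t x
        ≤ (c * x ^ N) * (x ^ M * (Real.exp ((t+1)^2/4) * Real.exp (-x))) :=
          mul_le_mul bound1 bound2 (W_nonneg x) (by positivity)
      _ = (c * Real.exp ((t+1)^2/4)) * (x ^ (N + M) * Real.exp (-x)) := by
          rw [pow_add]; ring

lemma poly_W_tendsto_atBot (p : ℝ[X]) :
    Tendsto (fun x => p.eval x * W lam t x) atBot (𝓝 0) := by
  have h := (poly_W_tendsto_atTop (lam := lam) (t := t)
    (p.comp (-X))).comp tendsto_neg_atBot_atTop
  refine h.congr fun x => ?_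
  simp only [Function.comp_apply, Polynomial.eval_comp, Polynomial.eval_neg, Polynomial.eval_X,
    neg_neg, W_even]

lemma hasDerivAt_abs_rpow {x : ℝ} (c : ℝ) (hx : x ≠ 0) :
    HasDerivAt (fun y : ℝ => |y| ^ c) (c * |x| ^ c / x) x := by
  rcases hx.lt_or_gt with hneg | hpos
  · have h1 : HasDerivAt (fun y : ℝ => (-y) ^ c) (c * (-x) ^ (c-1) * (-1)) x :=
      (Real.hasDerivAt_rpow_const (p := c) (Or.inl (neg_ne_zero.mpr hx))).comp x (hasDerivAt_neg x)
    have h2 : (fun y : ℝ => |y| ^ c) =ᶠ[𝓝 x] fun y : ℝ => (-y) ^ c := by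
      filter_upwards [isOpen_Iio.mem_nhds hneg] with y hy
      rw [abs_of_neg hy]
    have h3 := h1.congr_of_eventuallyEq h2
    refine h3.congr_deriv ?_
    rw [abs_of_neg hneg, Real.rpow_sub (by linarith : (0:ℝ) < -x), Real.rpow_one]
    field_simp
  · have h1 : HasDerivAt (fun y : ℝ => y ^ c) (c * x ^ (c-1)) x :=
      Real.hasDerivAt_rpow_const (p := c) (Or.inl hx)
    have h2 : (fun y : ℝ => |y| ^ c) =ᶠ[𝓝 x] fun y : ℝ => y ^ c := by
      filter_upwards [isOpen_Ioi.mem_nhds hpos] with y hy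
      rw [abs_of_pos hy]
    have h3 := h1.congr_of_eventuallyEq h2
    refine h3.congr_deriv ?_
    rw [abs_of_pos hpos, Real.rpow_sub hpos, Real.rpow_one]
    field_simp

lemma hasDerivAt_W {x : ℝ} (hx : x ≠ 0) :
    HasDerivAt (W lam t) (((2*lam+1)/x + (2*t*x - 4*x^3)) * W lam t x) x := by
  have hA := hasDerivAt_abs_rpow (2*lam+1) hx
  have hE : HasDerivAt (fun y : ℝ => t*y^2 - y^4) (2*t*x - 4*x^3) x := by
    have h2 := (hasDerivAt_pow 2 x).const_mul t
    have h4 := hasDerivAt_pow 4 x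
    refine (h2.sub h4).congr_deriv ?_
    push_cast; ring
  have h := hA.mul hE.exp
  have hWe : W lam t = fun y : ℝ => |y| ^ (2*lam+1) * Real.exp (t*y^2 - y^4) := rfl
  rw [hWe]
  refine h.congr_deriv ?_
  beta_reduce
  field_simp

lemma key_integral (hlam : -1 < lam) (f g : ℝ[X]) (hfg : f = X * g) :
    ∫ x : ℝ, (Polynomial.derivative f + C (2*lam+1) * g + C (2*t) * (X*f)
      - C 4 * (X^3*f)).eval x * W lam t x = 0 := by
  set D : ℝ[X] := Polynomial.derivative f + C (2*lam+1) * g + C (2*t) * (X*f)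
      - C 4 * (X^3*f) with hD
  set F : ℝ → ℝ := fun x => f.eval x * W lam t x with hF
  have hDint : Integrable (fun x => D.eval x * W lam t x) := integrable_poly_W hlam D
  have hderiv : ∀ x : ℝ, x ≠ 0 → HasDerivAt F (D.eval x * W lam t x) x := by
    intro x hx
    have h1 := (f.hasDerivAt x).mul (hasDerivAt_W (lam := lam) (t := t) hx)
    have hfx : f.eval x = x * Polynomial.eval x g := by rw [hfg]; simp
    refine h1.congr_deriv ?_
    simp only [hD, Polynomial.eval_add, Polynomial.eval_sub, Polynomial.eval_mul,
      Polynomial.eval_C, Polynomial.eval_X, Polynomial.eval_pow]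
    rw [hfx]
    field_simp
    ring
  have hcont : ContinuousAt F 0 := by
    have hc1 : Tendsto (fun x : ℝ => x * |x| ^ (2*lam+1)) (𝓝 0) (𝓝 0) := by
      have hpos : (0:ℝ) < 2*lam+2 := by linarith
      have htend : Tendsto (fun x : ℝ => |x| ^ (2*lam+2)) (𝓝 0) (𝓝 0) := by
        have h := (continuous_abs.tendsto (0:ℝ)).rpow_const (p := 2*lam+2) (Or.inr hpos.le)
        simpa [Real.zero_rpow (ne_of_gt hpos)] using h
      refine squeeze_zero_norm (fun x => ?_) htend
      by_cases hx : x = 0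
      · simp [hx, Real.zero_rpow (ne_of_gt hpos)]
      · have hax : (0:ℝ) < |x| := abs_pos.mpr hx
        have hsplit : |x| ^ (2*lam+2) = |x| * |x| ^ (2*lam+1) := by
          rw [show (2*lam+2 : ℝ) = 1 + (2*lam+1) by ring, Real.rpow_add hax, Real.rpow_one]
        rw [Real.norm_eq_abs, abs_mul, abs_of_nonneg (Real.rpow_nonneg (abs_nonneg x) _),
          hsplit]
    have hc2 : Continuous (fun x : ℝ => Polynomial.eval x g * Real.exp (t*x^2 - x^4)) := by
      exact g.continuous.mul (Real.continuous_exp.comp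
        (((continuous_const.mul (continuous_pow 2)).sub (continuous_pow 4))))
    have hT : Tendsto F (𝓝 0) (𝓝 0) := by
      have h := (hc2.tendsto 0).mul hc1
      rw [mul_zero] at h
      refine h.congr fun x => ?_
      simp only [hF, hfg, Polynomial.eval_mul, Polynomial.eval_X, W]
      ring
    have hF0 : F 0 = 0 := by simp [hF, hfg]
    simpa [ContinuousAt, hF0] using hT
  have hI1 : ∫ x in Iic (0:ℝ), D.eval x * W lam t x = F 0 - 0 :=
    integral_Iic_of_hasDerivAt_of_tendsto hcont.continuousWithinAt
      (fun x hx => hderiv x (ne_of_lt hx)) hDint.integrableOn (poly_W_tendsto_atBot f)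
  have hI2 : ∫ x in Ioi (0:ℝ), D.eval x * W lam t x = 0 - F 0 :=
    integral_Ioi_of_hasDerivAt_of_tendsto hcont.continuousWithinAt
      (fun x hx => hderiv x (ne_of_gt hx)) hDint.integrableOn (poly_W_tendsto_atTop f)
  calc ∫ x : ℝ, D.eval x * W lam t x
      = ∫ x in Iic (0:ℝ) ∪ Ioi (0:ℝ), D.eval x * W lam t x := by
        rw [Iic_union_Ioi, setIntegral_univ]
    _ = (∫ x in Iic (0:ℝ), D.eval x * W lam t x) + ∫ x in Ioi (0:ℝ), D.eval x * W lam t x :=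
        setIntegral_union (Iic_disjoint_Ioi le_rfl) measurableSet_Ioi
          hDint.integrableOn hDint.integrableOn
    _ = 0 := by rw [hI1, hI2]; ring


noncomputable def L (lam t : ℝ) (p : ℝ[X]) : ℝ := ∫ x : ℝ, p.eval x * W lam t x

lemma L_add (hlam : -1 < lam) (p q : ℝ[X]) :
    L lam t (p + q) = L lam t p + L lam t q := by
  unfold L
  rw [← integral_add (integrable_poly_W hlam p) (integrable_poly_W hlam q)]
  congr 1; funext x; rw [Polynomial.eval_add]; ring

lemma L_Cmul (a : ℝ) (p : ℝ[X]) : L lam t (C a * p) = a * L lam t p := by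
  unfold L
  rw [← integral_const_mul]
  congr 1; funext x; rw [Polynomial.eval_mul, Polynomial.eval_C]; ring

lemma L_zero : L lam t 0 = 0 := by
  unfold L; simp

lemma L_sub (hlam : -1 < lam) (p q : ℝ[X]) :
    L lam t (p - q) = L lam t p - L lam t q := by
  have h := L_add (t := t) hlam (p - q) q
  rw [sub_add_cancel] at h
  linarith

lemma L_pos (hlam : -1 < lam) {p : ℝ[X]} (hp : p ≠ 0) : 0 < L lam t (p * p) := by
  unfold L
  have hnn : (0 : ℝ → ℝ) ≤ fun x : ℝ => (p * p).eval x * W lam t x := fun x => by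
    show (0:ℝ) ≤ (p * p).eval x * W lam t x
    rw [Polynomial.eval_mul]
    exact mul_nonneg (mul_self_nonneg _) (W_nonneg x)
  refine (integral_pos_iff_support_of_nonneg hnn (integrable_poly_W hlam _)).mpr ?_
  have hS : (volume : Measure ℝ) ({x : ℝ | p.IsRoot x} ∪ {0}) = 0 :=
    ((Polynomial.finite_setOf_isRoot hp).union (Set.finite_singleton 0)).measure_zero _
  have hsub : (Function.support fun x : ℝ => (p * p).eval x * W lam t x)ᶜ ⊆
      ({x : ℝ | p.IsRoot x} ∪ {0}) := by
    intro x hx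
    by_contra hxS
    simp only [Set.mem_union, Set.mem_setOf_eq, Set.mem_singleton_iff, not_or] at hxS
    apply hx
    have h1 : p.eval x ≠ 0 := hxS.1
    have h2 : x ≠ 0 := hxS.2
    have hpos : 0 < (p * p).eval x * W lam t x := by
      rw [Polynomial.eval_mul]
      exact mul_pos (mul_self_pos.mpr h1) (W_pos h2)
    exact Function.mem_support.mpr (ne_of_gt hpos)
  rw [pos_iff_ne_zero]
  intro h0
  have huniv : (volume : Measure ℝ) Set.univ ≤
      volume (Function.support fun x : ℝ => (p * p).eval x * W lam t x)
      + volume ((Function.support fun x : ℝ => (p * p).eval x * W lam t x)ᶜ) := by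
    rw [← Set.union_compl_self (Function.support fun x : ℝ => (p * p).eval x * W lam t x)]
    exact measure_union_le _ _
  rw [Real.volume_univ, h0] at huniv
  have h2 := le_trans (measure_mono hsub) (le_of_eq hS)
  rw [le_zero_iff] at h2
  rw [h2] at huniv
  simp at huniv

end DPain

open DPain

/-- For `λ > −1`, `t ∈ ℝ` and `m = 2`, the recurrence coefficients
`β_n(t;λ)` of the monic polynomials orthogonal with respect to the generalised quartic
Freud weight `|x|^{2λ+1} exp(t x² − x⁴)` satisfy the discrete Painlevé I equation
`4 β_n (β_{n−1} + β_n + β_{n+1}) − 2 t β_n = n + (λ + 1/2)(1 − (−1)ⁿ)` for all `n ≥ 1`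
(with the convention `β₀ = 0`). -/
theorem discrete_painleve_I (lam t : ℝ) (hlam : -1 < lam)
    (P : ℕ → Polynomial ℝ) (β : ℕ → ℝ)
    (hmonic : ∀ n, (P n).Monic) (hdeg : ∀ n, (P n).natDegree = n)
    (horth : ∀ j k, j ≠ k →
      ∫ x : ℝ, (P j).eval x * (P k).eval x *
        (|x| ^ (2 * lam + 1) * Real.exp (t * x ^ 2 - x ^ 4)) = 0)
    (hβ0 : β 0 = 0) (hβpos : ∀ n, 1 ≤ n → 0 < β n)
    (hP0 : P 0 = 1) (hP1 : P 1 = X)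
    (hrec : ∀ n, 1 ≤ n → P (n + 1) = X * P n - C (β n) * P (n - 1)) :
    ∀ n : ℕ, 1 ≤ n →
      4 * β n * (β (n - 1) + β n + β (n + 1)) - 2 * t * β n =
        (n : ℝ) + (lam + 1 / 2) * (1 - (-1 : ℝ) ^ n) := by
  have hPne : ∀ k, P k ≠ 0 := fun k => (hmonic k).ne_zero
  have hlead : ∀ k, (P k).coeff k = 1 := fun k => by
    have h := (hmonic k).coeff_natDegree
    rwa [hdeg] at h
  have horthL : ∀ j k, j ≠ k → L lam t (P j * P k) = 0 := by
    intro j k hjk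
    have h2 := horth j k hjk
    calc L lam t (P j * P k)
        = ∫ x : ℝ, (P j).eval x * (P k).eval x *
            (|x| ^ (2 * lam + 1) * Real.exp (t * x ^ 2 - x ^ 4)) := by
          unfold DPain.L DPain.W
          congr 1; funext x; rw [Polynomial.eval_mul]
      _ = 0 := h2
  -- span lemma
  have Llow : ∀ m : ℕ, ∀ q : ℝ[X], q.natDegree ≤ m → ∀ k, q.natDegree < k →
      L lam t (q * P k) = 0 := by
    intro m
    induction m with
    | zero =>
        intro q hq k hk
        have hq0 : q.natDegree = 0 := Nat.le_zero.mp hq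
        obtain ⟨a, ha⟩ : ∃ a, q = C a := ⟨q.coeff 0, Polynomial.eq_C_of_natDegree_eq_zero hq0⟩
        subst ha
        have hk0 : 0 ≠ k := by omega
        calc L lam t (C a * P k) = L lam t (C a * (P 0 * P k)) := by
              rw [hP0, one_mul]
          _ = a * L lam t (P 0 * P k) := L_Cmul _ _
          _ = 0 := by rw [horthL 0 k hk0]; ring
    | succ m ih =>
        intro q hq k hk
        by_cases hqm : q.natDegree ≤ m
        · exact ih q hqm k hk
        · have hdq : q.natDegree = m + 1 := by omega
          set cq := q.coeff (m + 1) with hcq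
          set r := q - C cq * P (m + 1) with hr
          have hqr : q = C cq * P (m + 1) + r := by rw [hr]; ring
          have hrd : r.natDegree ≤ m := by
            by_cases hr0 : r = 0
            · simp [hr0]
            · have h1 : r.natDegree ≤ m + 1 := by
                refine le_trans (Polynomial.natDegree_sub_le _ _) (max_le (le_of_eq hdq) ?_)
                refine le_trans (Polynomial.natDegree_mul_le) ?_
                simp [hdeg]
              have hne : r.natDegree ≠ m + 1 := by
                intro hEq
                apply hr0
                apply Polynomial.leadingCoeff_eq_zero.mp
                rw [Polynomial.leadingCoeff, hEq, hr, Polynomial.coeff_sub,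
                  Polynomial.coeff_C_mul, hlead (m + 1), ← hcq]
                ring
              omega
          have hrk : r.natDegree < k := by omega
          have hsplit : q * P k = C cq * (P (m + 1) * P k) + r * P k := by
            rw [hqr]; ring
          rw [hsplit, L_add hlam, L_Cmul, horthL (m + 1) k (by omega), ih r hrd k hrk]
          ring
  -- recurrence in ℕ-subtraction form
  have recX : ∀ k, X * P k = P (k + 1) + C (β k) * P (k - 1) := by
    intro k
    cases k with
    | zero => simp [hP0, hP1, hβ0]
    | succ m =>
        rw [hrec (m + 1) (by omega)]
        simp only [Nat.add_sub_cancel]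
        ring
  have hpos : ∀ k, 0 < L lam t (P k * P k) := fun k => L_pos hlam (hPne k)
  have hβh : ∀ k, 1 ≤ k → L lam t (P k * P k) = β k * L lam t (P (k - 1) * P (k - 1)) := by
    intro k hk
    have hk1 : k - 1 + 1 = k := Nat.succ_pred_eq_of_pos hk
    have h1 : X * P (k - 1) = P k + C (β (k - 1)) * P (k - 1 - 1) := by
      have h := recX (k - 1)
      rwa [hk1] at h
    have e1 : L lam t ((X * P (k - 1)) * P k) = L lam t (P k * P k) := by
      rw [show (X * P (k - 1)) * P k
          = P k * P k + C (β (k - 1)) * (P (k - 1 - 1) * P k) from by rw [h1]; ring,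
        L_add hlam, L_Cmul, horthL (k - 1 - 1) k (by omega)]
      ring
    have e2 : L lam t ((X * P (k - 1)) * P k) = β k * L lam t (P (k - 1) * P (k - 1)) := by
      rw [show (X * P (k - 1)) * P k
          = P (k + 1) * P (k - 1) + C (β k) * (P (k - 1) * P (k - 1)) from by
            rw [show (X * P (k - 1)) * P k = (X * P k) * P (k - 1) from by ring, recX k]; ring,
        L_add hlam, L_Cmul, horthL (k + 1) (k - 1) (by omega)]
      ring
    rw [← e1, e2]
  -- parity
  have hparity : ∀ k, ∀ x : ℝ, (P k).eval (-x) = (-1 : ℝ) ^ k * (P k).eval x := by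
    intro k
    induction k using Nat.strong_induction_on with
    | _ k ih =>
      rcases k with _ | (_ | m)
      · intro x; simp [hP0]
      · intro x; simp [hP1]
      · intro x
        rw [hrec (m + 1) (by omega)]
        simp only [Polynomial.eval_sub, Polynomial.eval_mul, Polynomial.eval_X,
          Polynomial.eval_C, Nat.add_sub_cancel]
        rw [ih (m + 1) (by omega) x, ih m (by omega) x, pow_succ, pow_succ]
        ring
  have hcoeff0 : ∀ k, Odd k → (P k).coeff 0 = 0 := by
    intro k hk
    have h := hparity k 0
    rw [neg_zero, hk.neg_one_pow] at h
    have h2 : (P k).eval 0 = 0 := by linarith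
    rw [Polynomial.coeff_zero_eq_eval_zero, h2]
  intro n hn
  have hn1 : n - 1 + 1 = n := Nat.succ_pred_eq_of_pos hn
  obtain ⟨gp, hfg, hLg⟩ : ∃ gp : ℝ[X], P n * P (n - 1) = X * gp ∧
      (2 * lam + 1) * L lam t gp
        = ((lam + 1 / 2) * (1 - (-1 : ℝ) ^ n)) * L lam t (P (n - 1) * P (n - 1)) := by
    rcases Nat.even_or_odd n with hev | hod
    · -- n even
      have hodd : Odd (n - 1) := by
        rcases hev with ⟨m, hm⟩
        exact ⟨m - 1, by omega⟩
      set q' : ℝ[X] := (P (n - 1)).divX with hq'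
      have hsplitP : P (n - 1) = X * q' := by
        have h := Polynomial.X_mul_divX_add (P (n - 1))
        rw [hcoeff0 (n - 1) hodd] at h
        simpa [hq'] using h.symm
      have hq'deg : q'.natDegree < n := by
        rw [hq', Polynomial.natDegree_divX_eq_natDegree_tsub_one, hdeg]
        omega
      refine ⟨P n * q', by rw [hsplitP]; ring, ?_⟩
      have hL0 : L lam t (P n * q') = 0 := by
        rw [mul_comm]
        exact Llow _ _ le_rfl n hq'deg
      rw [hL0, hev.neg_one_pow]
      ring
    · -- n odd
      set q : ℝ[X] := (P n).divX with hq
      have hsplitP : P n = X * q := by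
        have h := Polynomial.X_mul_divX_add (P n)
        rw [hcoeff0 n hod] at h
        simpa [hq] using h.symm
      have hqdeg : q.natDegree = n - 1 := by
        rw [hq, Polynomial.natDegree_divX_eq_natDegree_tsub_one, hdeg]
      have hqlead : q.coeff (n - 1) = 1 := by
        rw [hq, Polynomial.coeff_divX, hn1, hlead n]
      refine ⟨q * P (n - 1), by rw [hsplitP]; ring, ?_⟩
      have hLq : L lam t (q * P (n - 1)) = L lam t (P (n - 1) * P (n - 1)) := by
        set r2 := q - P (n - 1) with hr2
        have hsplit : q * P (n - 1)
            = P (n - 1) * P (n - 1) + r2 * P (n - 1) := by rw [hr2]; ring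
        have hr2L : L lam t (r2 * P (n - 1)) = 0 := by
          by_cases h0 : r2 = 0
          · rw [h0, zero_mul]; exact L_zero
          · have h1 : r2.natDegree ≤ n - 1 :=
              le_trans (Polynomial.natDegree_sub_le _ _)
                (max_le (le_of_eq hqdeg) (le_of_eq (hdeg _)))
            have hne : r2.natDegree ≠ n - 1 := by
              intro hEq
              apply h0
              apply Polynomial.leadingCoeff_eq_zero.mp
              rw [Polynomial.leadingCoeff, hEq, hr2, Polynomial.coeff_sub, hqlead,
                hlead (n - 1)]
              norm_num
            exact Llow r2.natDegree r2 le_rfl (n - 1) (by omega)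
        rw [hsplit, L_add hlam, hr2L]
        ring
      rw [hLq, hod.neg_one_pow]
      ring
  have key := key_integral (lam := lam) (t := t) hlam (P n * P (n - 1)) gp hfg
  have key' : L lam t (Polynomial.derivative (P n * P (n - 1)) + C (2 * lam + 1) * gp
      + C (2 * t) * (X * (P n * P (n - 1)))
      - C 4 * (X ^ 3 * (P n * P (n - 1)))) = 0 := key
  rw [L_sub hlam, L_add hlam, L_add hlam, L_Cmul, L_Cmul, L_Cmul] at key'
  -- derivative term
  have hcast : ((n - 1 : ℕ) : ℝ) + 1 = (n : ℝ) := by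
    have h := congrArg (fun m : ℕ => (m : ℝ)) hn1
    push_cast at h
    linarith
  have hT1 : L lam t (Polynomial.derivative (P n * P (n - 1)))
      = (n : ℝ) * L lam t (P (n - 1) * P (n - 1)) := by
    rw [Polynomial.derivative_mul, L_add hlam]
    have hb : L lam t (P n * Polynomial.derivative (P (n - 1))) = 0 := by
      rw [mul_comm]
      refine Llow _ _ le_rfl n ?_
      have h := Polynomial.natDegree_derivative_le (P (n - 1))
      rw [hdeg] at h
      omega
    set r := Polynomial.derivative (P n) - C (n : ℝ) * P (n - 1) with hr
    have hco : r.coeff (n - 1) = 0 := by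
      rw [hr, Polynomial.coeff_sub, Polynomial.coeff_derivative, hn1, hlead n,
        Polynomial.coeff_C_mul, hlead (n - 1), hcast]
      ring
    have hrL : L lam t (r * P (n - 1)) = 0 := by
      by_cases h0 : r = 0
      · rw [h0, zero_mul]; exact L_zero
      · have h1 : r.natDegree ≤ n - 1 := by
          refine le_trans (Polynomial.natDegree_sub_le _ _) (max_le ?_ ?_)
          · have h := Polynomial.natDegree_derivative_le (P n)
            rw [hdeg] at h
            exact h
          · refine le_trans Polynomial.natDegree_mul_le ?_
            simp [hdeg]
        have hne : r.natDegree ≠ n - 1 := by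
          intro hEq
          exact h0 (Polynomial.leadingCoeff_eq_zero.mp
            (by rw [Polynomial.leadingCoeff, hEq]; exact hco))
        exact Llow r.natDegree r le_rfl (n - 1) (by omega)
    have hsplit : Polynomial.derivative (P n) * P (n - 1)
        = C (n : ℝ) * (P (n - 1) * P (n - 1)) + r * P (n - 1) := by
      rw [hr]; ring
    rw [hsplit, L_add hlam, L_Cmul, hrL, hb]
    ring
  have hT2 : L lam t (X * (P n * P (n - 1)))
      = β n * L lam t (P (n - 1) * P (n - 1)) := by
    rw [show X * (P n * P (n - 1))
        = P (n + 1) * P (n - 1) + C (β n) * (P (n - 1) * P (n - 1)) from by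
          rw [← mul_assoc, recX n]; ring,
      L_add hlam, L_Cmul, horthL (n + 1) (n - 1) (by omega)]
    ring
  have hA : X * (X * P n) = P (n + 2) + C (β (n + 1) + β n) * P n
      + C (β n * β (n - 1)) * P (n - 1 - 1) := by
    rw [recX n, mul_add, recX (n + 1), Nat.add_sub_cancel,
      mul_left_comm X (C (β n)) (P (n - 1)), recX (n - 1), hn1, C_add, C_mul]
    ring
  have hB : X * P (n - 1) = P n + C (β (n - 1)) * P (n - 1 - 1) := by
    have h := recX (n - 1)
    rwa [hn1] at h
  have hprod : X ^ 3 * (P n * P (n - 1))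
      = P (n + 2) * P n + C (β (n - 1)) * (P (n + 2) * P (n - 1 - 1))
      + C (β (n + 1) + β n) * (P n * P n)
      + C ((β (n + 1) + β n) * β (n - 1)) * (P n * P (n - 1 - 1))
      + C (β n * β (n - 1)) * (P (n - 1 - 1) * P n)
      + C (β n * β (n - 1) * β (n - 1)) * (P (n - 1 - 1) * P (n - 1 - 1)) := by
    calc X ^ 3 * (P n * P (n - 1)) = (X * (X * P n)) * (X * P (n - 1)) := by ring
      _ = _ := by rw [hA, hB]; simp only [C_mul]; ring
  have hT3 : L lam t (X ^ 3 * (P n * P (n - 1)))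
      = (β (n + 1) + β n) * (β n * L lam t (P (n - 1) * P (n - 1)))
        + β n * β (n - 1) * β (n - 1) * L lam t (P (n - 1 - 1) * P (n - 1 - 1)) := by
    rw [hprod, L_add hlam, L_add hlam, L_add hlam, L_add hlam, L_add hlam,
      L_Cmul, L_Cmul, L_Cmul, L_Cmul, L_Cmul,
      horthL (n + 2) n (by omega), horthL (n + 2) (n - 1 - 1) (by omega),
      horthL n (n - 1 - 1) (by omega), horthL (n - 1 - 1) n (by omega),
      hβh n hn]
    ring
  have hstep : β n * β (n - 1) * β (n - 1) * L lam t (P (n - 1 - 1) * P (n - 1 - 1))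
      = β n * β (n - 1) * L lam t (P (n - 1) * P (n - 1)) := by
    rcases eq_or_lt_of_le hn with h1 | h2
    · have hb : β (n - 1) = 0 := by
        rw [← h1]
        simpa using hβ0
      rw [hb]
      ring
    · rw [hβh (n - 1) (by omega)]
      ring
  rw [hT1, hLg, hT2, hT3] at key'
  refine mul_right_cancel₀ (ne_of_gt (hpos (n - 1))) ?_
  linear_combination -key' - 4 * hstep
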